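/- arXiv:2301.01966 — 3 statements merged into one kernel-verified Lean document; each statement's English description precedes it below -/
import Mathlib

section
/- Let ((Q_k, M_k))_{k ≥ 1} be an i.i.d. sequence of pairs of real random variables with M_k > 0 almost surely, and let p ∈ (0, 1] be such that E[M_1^p] < 1 and E[|Q_1|^p] < ∞. Then the series ∑_{k=1}^∞ A_{k−1} Q_k, where A_0 := 1 and A_n := M_1 M_2 ⋯ M_n for n ≥ 1, converges almost surely to a finite random variable. -/
open MeasureTheory ProbabilityTheory Filter Finset
open scoped ENNReal NNReal

lemma summable_of_rpow_summable (p : ℝ) (hp0 : 0 < p) (hp1 : p ≤ 1) (u : ℕ → ℝ)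
    (h : Summable fun n => |u n| ^ p) : Summable u := by
  rw [← summable_abs_iff]
  have h0 : Tendsto (fun n => |u n| ^ p) atTop (nhds 0) := h.tendsto_atTop_zero
  obtain ⟨N, hN⟩ : ∃ N, ∀ n ≥ N, |u n| ^ p ≤ 1 := by
    have := h0.eventually_le_const (zero_lt_one (α := ℝ))
    exact eventually_atTop.mp this
  have key : ∀ n, N ≤ n → |u n| ≤ |u n| ^ p := by
    intro n hn
    rcases eq_or_lt_of_le (abs_nonneg (u n)) with h' | h'
    · rw [← h', Real.zero_rpow hp0.ne']
    · have h1 : |u n| ≤ 1 := by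
        by_contra hgt
        push_neg at hgt
        have : (1 : ℝ) < |u n| ^ p :=
          Real.one_lt_rpow_iff_of_pos h' |>.mpr (Or.inl ⟨hgt, hp0⟩)
        exact absurd (hN n hn) (not_le.mpr this)
      calc |u n| = |u n| ^ (1 : ℝ) := (Real.rpow_one _).symm
        _ ≤ |u n| ^ p := Real.rpow_le_rpow_of_exponent_ge h' h1 hp1
  rw [← summable_nat_add_iff N]
  have hs : Summable fun n => |u (n + N)| ^ p :=
    (summable_nat_add_iff (f := fun n => |u n| ^ p) N).mpr h
  exact hs.of_nonneg_of_le (fun n => abs_nonneg _) (fun n => key (n + N) (Nat.le_add_left _ _))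

/-- Almost sure convergence of the perpetuity series `∑ A_{k-1} Q_k` (with
`A_n = M_1 ⋯ M_n`, here 0-indexed: pair number `k ≥ 1` is `ZM (k-1)`) when
`E[M_1^p] < 1` and `E[|Q_1|^p] < ∞` for some `p ∈ (0, 1]`. -/
theorem perpetuity_series_converges_ae
    {Ω : Type*} [MeasureSpace Ω] [IsProbabilityMeasure (ℙ : Measure Ω)]
    (ZM : ℕ → Ω → ℝ × ℝ) (hmeas : ∀ k, Measurable (ZM k))
    (hiid_indep : iIndepFun ZM ℙ)
    (hiid_ident : ∀ k, Measure.map (ZM k) ℙ = Measure.map (ZM 0) ℙ)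
    (hMpos : ∀ k, ∀ᵐ ω ∂ℙ, 0 < (ZM k ω).2)
    (p : ℝ) (hp0 : 0 < p) (hp1 : p ≤ 1)
    (hMp_int : Integrable (fun ω => (ZM 0 ω).2 ^ p) ℙ)
    (hMp : ∫ ω, (ZM 0 ω).2 ^ p ∂ℙ < 1)
    (hQp : Integrable (fun ω => |(ZM 0 ω).1| ^ p) ℙ) :
    ∀ᵐ ω ∂ℙ, ∃ L : ℝ, Tendsto
      (fun n => ∑ k ∈ Finset.range n,
        (∏ i ∈ Finset.range k, (ZM i ω).2) * (ZM k ω).1) atTop (nhds L) := by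
  -- measurable maps on the pair
  set g : ℝ × ℝ → ℝ≥0∞ := fun x => ENNReal.ofReal (|x.2| ^ p) with hg_def
  set h : ℝ × ℝ → ℝ≥0∞ := fun x => ENNReal.ofReal (|x.1| ^ p) with hh_def
  have hg : Measurable g :=
    ENNReal.measurable_ofReal.comp
      ((Real.continuous_rpow_const hp0.le).measurable.comp measurable_snd.abs)
  have hh : Measurable h :=
    ENNReal.measurable_ofReal.comp
      ((Real.continuous_rpow_const hp0.le).measurable.comp measurable_fst.abs)
  set X : ℕ → Ω → ℝ≥0∞ := fun i ω => g (ZM i ω) with hX_def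
  set Y : ℕ → Ω → ℝ≥0∞ := fun i ω => h (ZM i ω) with hY_def
  have hXmeas : ∀ i, Measurable (X i) := fun i => hg.comp (hmeas i)
  have hYmeas : ∀ i, Measurable (Y i) := fun i => hh.comp (hmeas i)
  have hX_indep : iIndepFun X ℙ :=
    hiid_indep.comp (fun _ => g) (fun _ => hg)
  -- identical distribution of lintegrals
  have hX_ident : ∀ i, ∫⁻ ω, X i ω ∂ℙ = ∫⁻ ω, X 0 ω ∂ℙ := by
    intro i
    calc ∫⁻ ω, X i ω ∂ℙ = ∫⁻ x, g x ∂(Measure.map (ZM i) ℙ) :=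
          (lintegral_map hg (hmeas i)).symm
      _ = ∫⁻ x, g x ∂(Measure.map (ZM 0) ℙ) := by rw [hiid_ident i]
      _ = ∫⁻ ω, X 0 ω ∂ℙ := lintegral_map hg (hmeas 0)
  have hY_ident : ∀ i, ∫⁻ ω, Y i ω ∂ℙ = ∫⁻ ω, Y 0 ω ∂ℙ := by
    intro i
    calc ∫⁻ ω, Y i ω ∂ℙ = ∫⁻ x, h x ∂(Measure.map (ZM i) ℙ) :=
          (lintegral_map hh (hmeas i)).symm
      _ = ∫⁻ x, h x ∂(Measure.map (ZM 0) ℙ) := by rw [hiid_ident i]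
      _ = ∫⁻ ω, Y 0 ω ∂ℙ := lintegral_map hh (hmeas 0)
  set r : ℝ≥0∞ := ∫⁻ ω, X 0 ω ∂ℙ with hr_def
  set c : ℝ≥0∞ := ∫⁻ ω, Y 0 ω ∂ℙ with hc_def
  -- r < 1
  have habs_ae : (fun ω => |(ZM 0 ω).2| ^ p) =ᵐ[ℙ] (fun ω => (ZM 0 ω).2 ^ p) := by
    filter_upwards [hMpos 0] with ω hω
    rw [abs_of_pos hω]
  have hr_lt : r < 1 := by
    have hint : Integrable (fun ω => |(ZM 0 ω).2| ^ p) ℙ := hMp_int.congr habs_ae.symm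
    have : r = ENNReal.ofReal (∫ ω, |(ZM 0 ω).2| ^ p ∂ℙ) :=
      (MeasureTheory.ofReal_integral_eq_lintegral_ofReal hint
        (Filter.Eventually.of_forall fun ω => Real.rpow_nonneg (abs_nonneg _) p)).symm
    rw [this, integral_congr_ae habs_ae]
    exact ENNReal.ofReal_lt_one.mpr hMp
  have hc_lt : c < ⊤ := by
    have : c = ENNReal.ofReal (∫ ω, |(ZM 0 ω).1| ^ p ∂ℙ) :=
      (MeasureTheory.ofReal_integral_eq_lintegral_ofReal hQp
        (Filter.Eventually.of_forall fun ω => Real.rpow_nonneg (abs_nonneg _) p)).symm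
    rw [this]; exact ENNReal.ofReal_lt_top
  -- lintegral of products of X's
  have hprodX : ∀ n, ∫⁻ ω, ∏ i ∈ Finset.range n, X i ω ∂ℙ = r ^ n := by
    intro n
    induction n with
    | zero => simp
    | succ n ih =>
      have hindep := hX_indep.indepFun_prod_range_succ hXmeas n
      have hPmeas : Measurable (∏ i ∈ Finset.range n, X i) := by
        rw [Finset.prod_fn]
        exact Finset.measurable_prod _ fun i _ => hXmeas i
      have := lintegral_mul_eq_lintegral_mul_lintegral_of_indepFun
        (f := ∏ i ∈ Finset.range n, X i) (g := X n) hPmeas (hXmeas n) hindep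
      simp only [Pi.mul_apply, Finset.prod_apply] at this
      calc ∫⁻ ω, ∏ i ∈ Finset.range (n + 1), X i ω ∂ℙ
          = ∫⁻ ω, (∏ i ∈ Finset.range n, X i ω) * X n ω ∂ℙ := by
            simp [Finset.prod_range_succ]
        _ = (∫⁻ ω, ∏ i ∈ Finset.range n, X i ω ∂ℙ) * ∫⁻ ω, X n ω ∂ℙ := this
        _ = r ^ n * r := by rw [ih, hX_ident n]
        _ = r ^ (n + 1) := by ring
  -- the main term and its lintegral
  set F : ℕ → Ω → ℝ≥0∞ := fun n ω =>
    ENNReal.ofReal (|(∏ i ∈ Finset.range n, (ZM i ω).2) * (ZM n ω).1| ^ p) with hF_def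
  have hF_eq : ∀ n ω, F n ω = (∏ i ∈ Finset.range n, X i ω) * Y n ω := by
    intro n ω
    have h1 : |(∏ i ∈ Finset.range n, (ZM i ω).2) * (ZM n ω).1| ^ p
        = (∏ i ∈ Finset.range n, |(ZM i ω).2| ^ p) * |(ZM n ω).1| ^ p := by
      rw [abs_mul, Finset.abs_prod,
        Real.mul_rpow (Finset.prod_nonneg fun i _ => abs_nonneg _) (abs_nonneg _),
        ← Real.finset_prod_rpow _ _ (fun i _ => abs_nonneg _) p]
    rw [hF_def]
    simp only [h1]
    rw [ENNReal.ofReal_mul (Finset.prod_nonneg fun i _ => Real.rpow_nonneg (abs_nonneg _) p),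
      ENNReal.ofReal_prod_of_nonneg (fun i _ => Real.rpow_nonneg (abs_nonneg _) p)]
  have hFmeas : ∀ n, Measurable (F n) := by
    intro n
    have : F n = fun ω => (∏ i ∈ Finset.range n, X i ω) * Y n ω := funext fun ω => hF_eq n ω
    rw [this]
    exact (Finset.measurable_prod _ fun i _ => hXmeas i).mul (hYmeas n)
  -- lintegral of F n
  have hFint : ∀ n, ∫⁻ ω, F n ω ∂ℙ = r ^ n * c := by
    intro n
    -- mixed family: T i = X i for i ≠ n, T n = Y n
    set T : ℕ → Ω → ℝ≥0∞ := fun i ω => (if i = n then h else g) (ZM i ω) with hT_def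
    have hTmeas : ∀ i, Measurable (T i) := by
      intro i
      by_cases hi : i = n
      · subst hi; simpa [hT_def, Function.comp_def] using hh.comp (hmeas i)
      · simpa [hT_def, hi, Function.comp_def] using hg.comp (hmeas i)
    have hT_indep : iIndepFun T ℙ :=
      hiid_indep.comp (fun i => if i = n then h else g)
        (fun i => by by_cases hi : i = n <;> simp [hi, hg, hh])
    have hindep := hT_indep.indepFun_finsetProd_of_notMem hTmeas
      (s := Finset.range n) (i := n) Finset.notMem_range_self
    have hTprod : ∀ ω, (∏ i ∈ Finset.range n, T i ω) = ∏ i ∈ Finset.range n, X i ω := by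
      intro ω
      apply Finset.prod_congr rfl
      intro i hi
      have : i ≠ n := Nat.ne_of_lt (Finset.mem_range.mp hi)
      simp [hT_def, this, hX_def]
    have hTn : T n = Y n := by simp [hT_def, hY_def]
    have hPmeas : Measurable (∏ i ∈ Finset.range n, T i) := by
      rw [Finset.prod_fn]
      exact Finset.measurable_prod _ fun i _ => hTmeas i
    have hmul := lintegral_mul_eq_lintegral_mul_lintegral_of_indepFun
      (f := ∏ i ∈ Finset.range n, T i) (g := T n) hPmeas (hTmeas n) hindep
    simp only [Pi.mul_apply, Finset.prod_apply] at hmul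
    calc ∫⁻ ω, F n ω ∂ℙ
        = ∫⁻ ω, (∏ i ∈ Finset.range n, T i ω) * T n ω ∂ℙ := by
          apply lintegral_congr
          intro ω
          rw [hF_eq n ω, hTprod ω, hTn]
      _ = (∫⁻ ω, ∏ i ∈ Finset.range n, T i ω ∂ℙ) * ∫⁻ ω, T n ω ∂ℙ := hmul
      _ = r ^ n * c := by
          rw [lintegral_congr hTprod, hprodX n, hTn, hY_ident n]
  -- total lintegral finite
  have htot : ∫⁻ ω, ∑' n, F n ω ∂ℙ < ⊤ := by
    rw [lintegral_tsum (fun n => (hFmeas n).aemeasurable)]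
    simp_rw [hFint]
    rw [ENNReal.tsum_mul_right, ENNReal.tsum_geometric]
    apply ENNReal.mul_lt_top _ hc_lt
    · rw [ENNReal.inv_lt_top]
      exact tsub_pos_of_lt hr_lt
  have hae : ∀ᵐ ω ∂ℙ, ∑' n, F n ω ≠ ⊤ := by
    filter_upwards [ae_lt_top (by measurability : Measurable fun ω => ∑' n, F n ω) htot.ne]
      with ω hω using hω.ne
  filter_upwards [hae] with ω hω
  -- summability of the real series
  have hsum_p : Summable fun n =>
      |(∏ i ∈ Finset.range n, (ZM i ω).2) * (ZM n ω).1| ^ p := by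
    have := ENNReal.summable_toReal hω
    refine this.congr fun n => ?_
    rw [hF_def]
    exact ENNReal.toReal_ofReal (Real.rpow_nonneg (abs_nonneg _) p)
  have hsum : Summable fun n => (∏ i ∈ Finset.range n, (ZM i ω).2) * (ZM n ω).1 :=
    summable_of_rpow_summable p hp0 hp1 _ hsum_p
  exact ⟨_, hsum.hasSum.tendsto_sum_nat⟩
end

section
/- Let ((Q_k, M_k))_{k ≥ 1} be an i.i.d. sequence of pairs of real random variables with M_k > 0 almost surely, put A_0 := 1 and A_n := M_1 ⋯ M_n for n ≥ 1, and suppose that the series Y := ∑_{k=1}^∞ A_{k−1} Q_k converges almost surely to a finite random variable. If there exists n ≥ 1 such that both the random variable Q_1 and the random variable (Q_1 + M_1 Q_2 + ⋯ + A_{n−1} Q_n)/A_n are unbounded from above, then Y is unbounded from above. -/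
open MeasureTheory ProbabilityTheory Filter Finset

namespace PerpetuityAux

/-- Partial sums of the perpetuity series as a function of the sequence of pairs. -/
noncomputable def pS (x : ℕ → ℝ × ℝ) (m : ℕ) : ℝ :=
  ∑ k ∈ Finset.range m, (∏ i ∈ Finset.range k, (x i).2) * (x k).1

/-- Partial products. -/
noncomputable def pA (x : ℕ → ℝ × ℝ) (m : ℕ) : ℝ :=
  ∏ i ∈ Finset.range m, (x i).2

lemma measurable_pS (m : ℕ) : Measurable fun x => pS x m := by
  apply Finset.measurable_sum
  intro k _
  exact (Finset.measurable_prod _ fun i _ => (measurable_pi_apply i).snd).mul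
    (measurable_pi_apply k).fst

lemma measurable_pA (m : ℕ) : Measurable fun x => pA x m :=
  Finset.measurable_prod _ fun i _ => (measurable_pi_apply i).snd

noncomputable def limF (x : ℕ → ℝ × ℝ) : ℝ := limsup (pS x) atTop

lemma measurable_limF : Measurable limF :=
  Measurable.limsup fun m => measurable_pS m

lemma limF_eq {x : ℕ → ℝ × ℝ} {L : ℝ} (h : Tendsto (pS x) atTop (nhds L)) :
    limF x = L := h.limsup_eq

lemma pS_add (x : ℕ → ℝ × ℝ) (m j : ℕ) :
    pS x (m + j) = pS x m + pA x m * pS (fun k => x (m + k)) j := by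
  unfold pS pA
  rw [Finset.sum_range_add, Finset.mul_sum]
  congr 1
  refine Finset.sum_congr rfl fun k _ => ?_
  rw [Finset.prod_range_add]
  ring

variable {Ω : Type*} [MeasureSpace Ω] [IsProbabilityMeasure (ℙ : Measure Ω)]
  (ZM : ℕ → Ω → ℝ × ℝ)

lemma finLaw (hmeas : ∀ k, Measurable (ZM k))
    (hiid_indep : iIndepFun ZM ℙ)
    (hiid_ident : ∀ k, Measure.map (ZM k) ℙ = Measure.map (ZM 0) ℙ)
    (g : ℕ → ℕ) (hg : Function.Injective g) (s : Finset ℕ) :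
    Measure.map (fun ω (i : s) => ZM (g i) ω) ℙ
      = Measure.pi (fun _ : s => Measure.map (ZM 0) ℙ) := by
  classical
  haveI : IsProbabilityMeasure (Measure.map (ZM 0) ℙ) :=
    Measure.isProbabilityMeasure_map (hmeas 0).aemeasurable
  have hvec : Measurable (fun ω (i : s) => ZM (g i) ω) :=
    measurable_pi_lambda _ fun i => hmeas (g i)
  symm
  apply Measure.pi_eq
  intro B hB
  set C : ℕ → Set (ℝ × ℝ) := fun i => if h : i ∈ s then B ⟨i, h⟩ else Set.univ with hCdef
  have hCmeas : ∀ i, MeasurableSet (C i) := by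
    intro i
    by_cases h : i ∈ s
    · simpa [hCdef, h] using hB ⟨i, h⟩
    · simp [hCdef, h]
  have hCB : ∀ i : s, C i = B i := fun i => by simp [hCdef, i.2]
  rw [Measure.map_apply hvec (MeasurableSet.univ_pi hB)]
  have hpre : (fun ω (i : s) => ZM (g i) ω) ⁻¹' Set.pi Set.univ B
      = ⋂ j ∈ s.image g, ZM j ⁻¹' C (Function.invFun g j) := by
    ext ω
    simp only [Set.mem_preimage, Set.mem_pi, Set.mem_univ, forall_true_left,
      Set.mem_iInter, Finset.mem_image]
    constructor
    · rintro h j ⟨i, hi, rfl⟩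
      rw [Function.leftInverse_invFun hg i, hCB ⟨i, hi⟩]
      exact h ⟨i, hi⟩
    · intro h i
      have := h (g i) ⟨i, i.2, rfl⟩
      rw [Function.leftInverse_invFun hg] at this
      rwa [hCB i] at this
  rw [hpre]
  rw [hiid_indep.meas_biInter (fun j _ => ⟨C (Function.invFun g j), hCmeas _, rfl⟩)]
  rw [Finset.prod_image (fun i _ j _ hij => hg hij)]
  have hterm : ∀ i ∈ s, ℙ (ZM (g i) ⁻¹' C (Function.invFun g (g i)))
      = Measure.map (ZM 0) ℙ (C i) := by
    intro i hi
    rw [Function.leftInverse_invFun hg i, ← hiid_ident (g i),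
      Measure.map_apply (hmeas (g i)) (hCmeas i)]
  rw [Finset.prod_congr rfl hterm]
  rw [← Finset.prod_attach s fun i => Measure.map (ZM 0) ℙ (C i)]
  rw [Finset.univ_eq_attach]
  exact Finset.prod_congr rfl fun i _ => by rw [hCB i]

lemma shiftLaw (hmeas : ∀ k, Measurable (ZM k))
    (hiid_indep : iIndepFun ZM ℙ)
    (hiid_ident : ∀ k, Measure.map (ZM k) ℙ = Measure.map (ZM 0) ℙ)
    (n : ℕ) :
    Measure.map (fun ω (k : ℕ) => ZM (n + k) ω) ℙ
      = Measure.map (fun ω (k : ℕ) => ZM k ω) ℙ := by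
  have hΦ1 : Measurable (fun ω (k : ℕ) => ZM (n + k) ω) :=
    measurable_pi_lambda _ fun k => hmeas _
  have hΦ2 : Measurable (fun ω (k : ℕ) => ZM k ω) :=
    measurable_pi_lambda _ fun k => hmeas _
  haveI : IsProbabilityMeasure (Measure.map (fun ω (k : ℕ) => ZM (n + k) ω) ℙ) :=
    Measure.isProbabilityMeasure_map hΦ1.aemeasurable
  haveI : IsProbabilityMeasure (Measure.map (fun ω (k : ℕ) => ZM k ω) ℙ) :=
    Measure.isProbabilityMeasure_map hΦ2.aemeasurable
  refine ext_of_generate_finite (measurableCylinders (fun _ : ℕ => ℝ × ℝ))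
    generateFrom_measurableCylinders.symm isPiSystem_measurableCylinders (fun t ht => ?_) ?_
  · 
    obtain ⟨s, S, hS, rfl⟩ := (mem_measurableCylinders t).mp ht
    rw [Measure.map_apply hΦ1 hS.cylinder, Measure.map_apply hΦ2 hS.cylinder]
    have e1 : (fun ω (k : ℕ) => ZM (n + k) ω) ⁻¹' cylinder s S
        = (fun ω (i : s) => ZM (n + (i : ℕ)) ω) ⁻¹' S := rfl
    have e2 : (fun ω (k : ℕ) => ZM k ω) ⁻¹' cylinder s S
        = (fun ω (i : s) => ZM (i : ℕ) ω) ⁻¹' S := rfl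
    have l1 := finLaw ZM hmeas hiid_indep hiid_ident (fun k => n + k)
      (add_right_injective n) s
    have l2 := finLaw ZM hmeas hiid_indep hiid_ident id (fun a b hab => hab) s
    simp only [id_eq] at l2
    rw [e1, e2,
      ← Measure.map_apply (measurable_pi_lambda _ fun i : s => hmeas _) hS,
      ← Measure.map_apply (measurable_pi_lambda _ fun i : s => hmeas _) hS, l1, l2]
  · simp [measure_univ]

end PerpetuityAux

open PerpetuityAux

/-- Sufficient condition for unboundedness from above of the perpetuity
`Y = ∑_{k ≥ 1} A_{k-1} Q_k` (0-indexed: pair number `k ≥ 1` is `ZM (k-1)`,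
`A_n = ∏_{i < n} M_i`): if for some `n ≥ 1` both `Q_1` and
`(Q_1 + M_1 Q_2 + ⋯ + A_{n-1} Q_n)/A_n` are unbounded from above, then so is `Y`. -/
theorem perpetuity_unbounded_above
    {Ω : Type*} [MeasureSpace Ω] [IsProbabilityMeasure (ℙ : Measure Ω)]
    (ZM : ℕ → Ω → ℝ × ℝ) (hmeas : ∀ k, Measurable (ZM k))
    (hiid_indep : iIndepFun ZM ℙ)
    (hiid_ident : ∀ k, Measure.map (ZM k) ℙ = Measure.map (ZM 0) ℙ)
    (hMpos : ∀ k, ∀ᵐ ω ∂ℙ, 0 < (ZM k ω).2)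
    (Y : Ω → ℝ) (hYmeas : Measurable Y)
    (hconv : ∀ᵐ ω ∂ℙ, Tendsto
      (fun n => ∑ k ∈ Finset.range n,
        (∏ i ∈ Finset.range k, (ZM i ω).2) * (ZM k ω).1) atTop (nhds (Y ω)))
    (hn : ∃ n : ℕ, 1 ≤ n ∧
      (∀ c : ℝ, 0 < ℙ {ω | (ZM 0 ω).1 > c}) ∧
      (∀ c : ℝ, 0 < ℙ {ω | (∑ k ∈ Finset.range n,
          (∏ i ∈ Finset.range k, (ZM i ω).2) * (ZM k ω).1) /
          (∏ i ∈ Finset.range n, (ZM i ω).2) > c})) :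
    ∀ c : ℝ, 0 < ℙ {ω | Y ω > c} := by
  classical
  obtain ⟨n, hn1, hQunb, hUnb⟩ := hn
  by_contra hcon
  push_neg at hcon
  obtain ⟨c0, hc0⟩ := hcon
  have hc0' : ℙ {ω | Y ω > c0} = 0 := le_antisymm hc0 zero_le
  set C : Set ℝ := {c | ℙ {ω | Y ω > c} = 0} with hC
  have hCne : C.Nonempty := ⟨c0, hc0'⟩
  have hexists : ∃ m : ℕ, ℙ {ω | Y ω > -(m : ℝ)} ≠ 0 := by
    by_contra hall
    push_neg at hall
    have hsub : (Set.univ : Set Ω) ⊆ ⋃ m : ℕ, {ω | Y ω > -(m : ℝ)} := by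
      intro ω _
      obtain ⟨m, hm⟩ := exists_nat_gt (-(Y ω))
      exact Set.mem_iUnion.2 ⟨m, by simp only [Set.mem_setOf_eq]; linarith⟩
    have h0 : ℙ (⋃ m : ℕ, {ω | Y ω > -(m : ℝ)}) = 0 :=
      measure_iUnion_null fun m => hall m
    have h1 : ℙ (Set.univ : Set Ω) ≤ ℙ (⋃ m : ℕ, {ω | Y ω > -(m : ℝ)}) :=
      measure_mono hsub
    rw [h0] at h1
    simp at h1
  obtain ⟨m1, hm1⟩ := hexists
  have hCbdd : BddBelow C := by
    refine ⟨-(m1 : ℝ), fun c hc => ?_⟩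
    by_contra hlt
    push_neg at hlt
    exact hm1 (measure_mono_null (fun ω hω => lt_trans hlt hω) hc)
  set cs := sInf C with hcs
  have hcs_le : ∀ t : ℝ, ℙ {ω | Y ω > t} = 0 → cs ≤ t := fun t ht => csInf_le hCbdd ht
  have hcs0 : ℙ {ω | Y ω > cs} = 0 := by
    have hsub : {ω | Y ω > cs} ⊆ ⋃ m : ℕ, {ω | Y ω > cs + 1 / ((m : ℝ) + 1)} := by
      intro ω hω
      have hω' : cs < Y ω := hω
      obtain ⟨m, hm⟩ := exists_nat_one_div_lt (sub_pos.2 hω')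
      exact Set.mem_iUnion.2 ⟨m, by simp only [Set.mem_setOf_eq]; linarith⟩
    refine measure_mono_null hsub (measure_iUnion_null fun m => ?_)
    have hpos : (0 : ℝ) < 1 / ((m : ℝ) + 1) := by positivity
    obtain ⟨c, hcC, hclt⟩ := exists_lt_of_csInf_lt hCne (show cs < cs + 1 / ((m : ℝ) + 1) by linarith)
    exact measure_mono_null (fun ω hω => lt_trans hclt hω) hcC
  -- measurability helpers
  have hΦ : Measurable (fun ω (k : ℕ) => ZM k ω) := measurable_pi_lambda _ fun k => hmeas k
  have hMae : ∀ᵐ ω ∂ℙ, ∀ k, 0 < (ZM k ω).2 := ae_all_iff.2 hMpos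
  have hconv' : ∀ᵐ ω ∂ℙ, Tendsto (pS (fun k => ZM k ω)) atTop (nhds (Y ω)) := hconv
  -- KEY STEP
  have key : ∀ m : ℕ, ∀ᵐ ω ∂ℙ,
      pS (fun k => ZM k ω) m ≤ cs * (1 - pA (fun k => ZM k ω) m) := by
    intro m
    have hΦm : Measurable (fun ω (k : ℕ) => ZM (m + k) ω) :=
      measurable_pi_lambda _ fun k => hmeas _
    set V : Ω → ℝ := fun ω => limF (fun k => ZM (m + k) ω) with hVdef
    have hVmeas : Measurable V := measurable_limF.comp hΦm
    have hYae : (fun ω => limF (fun k => ZM k ω)) =ᵐ[ℙ] Y :=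
      hconv'.mono fun ω hω => limF_eq hω
    have hlawV : Measure.map V ℙ = Measure.map Y ℙ := by
      calc Measure.map V ℙ
          = Measure.map limF (Measure.map (fun ω (k : ℕ) => ZM (m + k) ω) ℙ) :=
            (Measure.map_map measurable_limF hΦm).symm
        _ = Measure.map limF (Measure.map (fun ω (k : ℕ) => ZM k ω) ℙ) := by
            rw [shiftLaw ZM hmeas hiid_indep hiid_ident m]
        _ = Measure.map (fun ω => limF (fun k => ZM k ω)) ℙ :=
            Measure.map_map measurable_limF hΦ
        _ = Measure.map Y ℙ := Measure.map_congr hYae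
    have hid : ∀ᵐ ω ∂ℙ,
        pS (fun k => ZM k ω) m + pA (fun k => ZM k ω) m * V ω = Y ω := by
      filter_upwards [hconv', hMae] with ω hc hM
      have hA : 0 < pA (fun k => ZM k ω) m := by
        show (0 : ℝ) < ∏ i ∈ Finset.range m, (ZM i ω).2
        exact Finset.prod_pos fun i _ => hM i
      have h1 : ∀ j, pS (fun k => ZM (m + k) ω) j
          = (pS (fun k => ZM k ω) (m + j) - pS (fun k => ZM k ω) m) / pA (fun k => ZM k ω) m := by
        intro j
        rw [pS_add]
        field_simp
        ring
      have h2 : Tendsto (fun j : ℕ => pS (fun k => ZM k ω) (m + j)) atTop (nhds (Y ω)) := by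
        have h3 := hc.comp (tendsto_add_atTop_nat m)
        simpa [Function.comp_def, add_comm] using h3
      have htend : Tendsto (pS (fun k => ZM (m + k) ω)) atTop
          (nhds ((Y ω - pS (fun k => ZM k ω) m) / pA (fun k => ZM k ω) m)) := by
        rw [show (pS (fun k => ZM (m + k) ω))
          = fun j => (pS (fun k => ZM k ω) (m + j) - pS (fun k => ZM k ω) m)
              / pA (fun k => ZM k ω) m from funext h1]
        exact (h2.sub_const _).div_const _
      have hVeq : V ω = (Y ω - pS (fun k => ZM k ω) m) / pA (fun k => ZM k ω) m :=
        limF_eq htend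
      rw [hVeq]
      field_simp
      ring
    set W : Ω → ℝ × ℝ :=
      fun ω => (pS (fun k => ZM k ω) m, pA (fun k => ZM k ω) m) with hWdef
    have hWmeas : Measurable W :=
      ((measurable_pS m).comp hΦ).prodMk ((measurable_pA m).comp hΦ)
    -- independence
    have hle : ∀ i, MeasurableSpace.comap (ZM i) inferInstance
        ≤ (inferInstance : MeasurableSpace Ω) := fun i => (hmeas i).comap_le
    have hIndep := indep_biSup_compl hle hiid_indep {i : ℕ | i < m}
    have hWle : MeasurableSpace.comap W inferInstance
        ≤ ⨆ i ∈ {i : ℕ | i < m}, MeasurableSpace.comap (ZM i) inferInstance := by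
      rw [← measurable_iff_comap_le]
      have hZ : ∀ i < m, Measurable[⨆ i ∈ {i : ℕ | i < m},
          MeasurableSpace.comap (ZM i) inferInstance] (ZM i) := fun i hi =>
        Measurable.of_comap_le (le_biSup (s := {i : ℕ | i < m})
          (fun j => MeasurableSpace.comap (ZM j) inferInstance) hi)
      refine Measurable.prodMk ?_ ?_
      · refine Finset.measurable_sum _ fun k hk => ?_
        refine Measurable.mul ?_ ((hZ k (Finset.mem_range.1 hk)).fst)
        exact Finset.measurable_prod _ fun i hi =>
          (hZ i (lt_trans (Finset.mem_range.1 hi) (Finset.mem_range.1 hk))).snd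
      · exact Finset.measurable_prod _ fun i hi => (hZ i (Finset.mem_range.1 hi)).snd
    have hVle : MeasurableSpace.comap V inferInstance
        ≤ ⨆ i ∈ {i : ℕ | i < m}ᶜ, MeasurableSpace.comap (ZM i) inferInstance := by
      have e0 : MeasurableSpace.comap V inferInstance
          = MeasurableSpace.comap (fun ω (k : ℕ) => ZM (m + k) ω)
              (MeasurableSpace.comap limF inferInstance) :=
        (MeasurableSpace.comap_comp (f := limF)
          (g := fun ω (k : ℕ) => ZM (m + k) ω)).symm
      rw [e0]
      calc MeasurableSpace.comap (fun ω (k : ℕ) => ZM (m + k) ω)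
            (MeasurableSpace.comap limF inferInstance)
          ≤ MeasurableSpace.comap (fun ω (k : ℕ) => ZM (m + k) ω) MeasurableSpace.pi :=
            MeasurableSpace.comap_mono measurable_limF.comap_le
        _ = ⨆ k : ℕ, MeasurableSpace.comap (fun ω => ZM (m + k) ω) inferInstance := by
            rw [show (MeasurableSpace.pi : MeasurableSpace (ℕ → ℝ × ℝ))
              = ⨆ k : ℕ, MeasurableSpace.comap (fun x : ℕ → ℝ × ℝ => x k) inferInstance from rfl,
              MeasurableSpace.comap_iSup]
            exact iSup_congr fun k => MeasurableSpace.comap_comp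
        _ ≤ ⨆ i ∈ {i : ℕ | i < m}ᶜ, MeasurableSpace.comap (ZM i) inferInstance :=
            iSup_le fun k => le_biSup (s := {i : ℕ | i < m}ᶜ)
              (fun j => MeasurableSpace.comap (ZM j) inferInstance)
              (by simp : (m + k) ∈ {i : ℕ | i < m}ᶜ)
    have hindep : IndepFun W V ℙ :=
      indep_of_indep_of_le_right (indep_of_indep_of_le_left hIndep hWle) hVle
    haveI : IsProbabilityMeasure (Measure.map W ℙ) :=
      Measure.isProbabilityMeasure_map hWmeas.aemeasurable
    haveI : IsProbabilityMeasure (Measure.map V ℙ) :=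
      Measure.isProbabilityMeasure_map hVmeas.aemeasurable
    have hjoint : Measure.map (fun ω => (W ω, V ω)) ℙ
        = (Measure.map W ℙ).prod (Measure.map V ℙ) :=
      (indepFun_iff_map_prod_eq_prod_map_map hWmeas.aemeasurable hVmeas.aemeasurable).1 hindep
    set E : Set ((ℝ × ℝ) × ℝ) := {p | cs < p.1.1 + p.1.2 * p.2} with hEdef
    have hE : MeasurableSet E :=
      measurableSet_lt measurable_const
        ((measurable_fst.fst).add ((measurable_fst.snd).mul measurable_snd))
    have hsets : ((fun ω => (W ω, V ω)) ⁻¹' E : Set Ω) =ᵐ[ℙ] ({ω | Y ω > cs} : Set Ω) := by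
      filter_upwards [hid] with ω h
      change (cs < pS (fun k => ZM k ω) m + pA (fun k => ZM k ω) m * V ω) = (Y ω > cs)
      rw [h]
    have hEmap : (Measure.map W ℙ).prod (Measure.map V ℙ) E = 0 := by
      rw [← hjoint, Measure.map_apply (hWmeas.prodMk hVmeas) hE]
      exact (measure_congr hsets).trans hcs0
    have hslice := (Measure.measure_prod_null hE).1 hEmap
    have hA2 : ∀ᵐ w ∂(Measure.map W ℙ), 0 < w.2 := by
      rw [ae_map_iff hWmeas.aemeasurable (measurableSet_lt measurable_const measurable_snd)]
      filter_upwards [hMae] with ω hM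
      show (0 : ℝ) < ∏ i ∈ Finset.range m, (ZM i ω).2
      exact Finset.prod_pos fun i _ => hM i
    have hD : ∀ᵐ w ∂(Measure.map W ℙ), w.1 ≤ cs * (1 - w.2) := by
      filter_upwards [hslice, hA2] with w h0 hw2
      simp only [Pi.zero_apply] at h0
      have hset : Prod.mk w ⁻¹' E = Set.Ioi ((cs - w.1) / w.2) := by
        ext v
        simp only [Set.mem_preimage, hEdef, Set.mem_setOf_eq, Set.mem_Ioi]
        rw [div_lt_iff₀ hw2]
        constructor
        · intro h'
          have := mul_comm w.2 v
          linarith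
        · intro h'
          have := mul_comm w.2 v
          linarith
      have hV0 : Measure.map V ℙ (Set.Ioi ((cs - w.1) / w.2)) = 0 := by
        rw [← hset]; exact h0
      have hY0 : ℙ {ω | Y ω > (cs - w.1) / w.2} = 0 := by
        have h4 : Measure.map Y ℙ (Set.Ioi ((cs - w.1) / w.2)) = 0 := by
          rw [← hlawV]; exact hV0
        rwa [Measure.map_apply hYmeas measurableSet_Ioi] at h4
      have hle' := hcs_le _ hY0
      rw [le_div_iff₀ hw2] at hle'
      nlinarith [hle']
    have hDset : MeasurableSet {w : ℝ × ℝ | w.1 ≤ cs * (1 - w.2)} :=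
      measurableSet_le measurable_fst (measurable_const.mul (measurable_const.sub measurable_snd))
    exact (ae_map_iff hWmeas.aemeasurable hDset).1 hD
  -- ENDGAME
  rcases le_or_gt 0 cs with hpos | hneg
  · have h1 := key 1
    have hQ : ∀ᵐ ω ∂ℙ, (ZM 0 ω).1 ≤ cs := by
      filter_upwards [h1, hMae] with ω hle hM
      have e1 : pS (fun k => ZM k ω) 1 = (ZM 0 ω).1 := by simp [pS]
      have e2 : pA (fun k => ZM k ω) 1 = (ZM 0 ω).2 := by simp [pA]
      rw [e1, e2] at hle
      nlinarith [hM 0, mul_nonneg hpos (hM 0).le]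
    have hzero : ℙ {ω | (ZM 0 ω).1 > cs} = 0 := by
      have h2 := ae_iff.1 hQ
      simpa only [not_le] using h2
    exact (hQunb cs).ne' hzero
  · have h2 := key n
    have hU : ∀ᵐ ω ∂ℙ,
        (∑ k ∈ Finset.range n, (∏ i ∈ Finset.range k, (ZM i ω).2) * (ZM k ω).1) /
          (∏ i ∈ Finset.range n, (ZM i ω).2) ≤ -cs := by
      filter_upwards [h2, hMae] with ω hle hM
      have hA : (0 : ℝ) < ∏ i ∈ Finset.range n, (ZM i ω).2 :=
        Finset.prod_pos fun i _ => hM i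
      rw [div_le_iff₀ hA]
      have e1 : pS (fun k => ZM k ω) n
          = ∑ k ∈ Finset.range n, (∏ i ∈ Finset.range k, (ZM i ω).2) * (ZM k ω).1 := rfl
      have e2 : pA (fun k => ZM k ω) n = ∏ i ∈ Finset.range n, (ZM i ω).2 := rfl
      rw [e1, e2] at hle
      nlinarith [hle, hA]
    have hzero : ℙ {ω | (∑ k ∈ Finset.range n,
        (∏ i ∈ Finset.range k, (ZM i ω).2) * (ZM k ω).1) /
        (∏ i ∈ Finset.range n, (ZM i ω).2) > -cs} = 0 := by
      have h3 := ae_iff.1 hU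
      simpa only [not_le] using h3
    exact (hUnb (-cs)).ne' hzero
end

section
/- Let ((Q_k, M_k))_{k ≥ 1} be an i.i.d. sequence of pairs of real random variables with M_k > 0 almost surely, let p > 0 with ρ := E[M_1^p] < 1, let A_0 := 1 and A_n := M_1 ⋯ M_n for n ≥ 1, and let (Ẑ_n)_{n ≥ 1} be identically distributed nonnegative random variables with E[Ẑ_1^p] < ∞ such that for each n the random variable Ẑ_n is independent of A_{n−1}. Then the random variables Δ_n := A_{n−1} Ẑ_n converge to 0 almost surely as n → ∞. -/
open MeasureTheory ProbabilityTheory Filter Finset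
open scoped ENNReal NNReal

/-- If `(Q_k, M_k)` are i.i.d. pairs with `M_k > 0` a.s., `ρ = E[M_1^p] < 1` for some
`p > 0`, `A_n = M_1 ⋯ M_n` (here 0-indexed: `A_{n-1}` for the pair number `n ≥ 1` is
`∏_{i < n-1}`), and `(Ẑ_n)` are identically distributed nonnegative random variables
with `E[Ẑ_1^p] < ∞` such that `Ẑ_n` is independent of `A_{n-1}`, then
`Δ_n = A_{n-1} Ẑ_n → 0` almost surely. -/
theorem weighted_iid_tendsto_zero
    {Ω : Type*} [MeasureSpace Ω] [IsProbabilityMeasure (ℙ : Measure Ω)]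
    (ZM : ℕ → Ω → ℝ × ℝ) (hZMmeas : ∀ k, Measurable (ZM k))
    (hiid_indep : iIndepFun ZM ℙ)
    (hiid_ident : ∀ k, Measure.map (ZM k) ℙ = Measure.map (ZM 0) ℙ)
    (hMpos : ∀ k, ∀ᵐ ω ∂ℙ, 0 < (ZM k ω).2)
    (p : ℝ) (hp : 0 < p)
    (hMp_int : Integrable (fun ω => (ZM 0 ω).2 ^ p) ℙ)
    (hρ : ∫ ω, (ZM 0 ω).2 ^ p ∂ℙ < 1)
    (Z : ℕ → Ω → ℝ) (hZmeas : ∀ n, Measurable (Z n))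
    (hZnonneg : ∀ n ω, 0 ≤ Z n ω)
    (hZident : ∀ n, Measure.map (Z n) ℙ = Measure.map (Z 0) ℙ)
    (hZp : Integrable (fun ω => Z 0 ω ^ p) ℙ)
    (hZindep : ∀ n, IndepFun (Z n) (fun ω => ∏ i ∈ Finset.range n, (ZM i ω).2) ℙ) :
    ∀ᵐ ω ∂ℙ, Tendsto
      (fun n => (∏ i ∈ Finset.range n, (ZM i ω).2) * Z n ω) atTop (nhds 0) := by
  classical
  set φ : ℝ → ℝ≥0∞ := fun x => ENNReal.ofReal (|x| ^ p) with hφdef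
  have hφmeas : Measurable φ :=
    ((Real.continuous_rpow_const hp.le).comp continuous_abs).measurable.ennreal_ofReal
  set g : ℕ → Ω → ℝ≥0∞ := fun i ω => φ ((ZM i ω).2) with hgdef
  set h : ℕ → Ω → ℝ≥0∞ := fun n ω => φ (Z n ω) with hhdef
  have hgmeas : ∀ i, Measurable (g i) :=
    fun i => hφmeas.comp (measurable_snd.comp (hZMmeas i))
  have hhmeas : ∀ n, Measurable (h n) := fun n => hφmeas.comp (hZmeas n)
  have hgiid : iIndepFun g ℙ :=
    hiid_indep.comp (fun _ (x : ℝ × ℝ) => φ x.2) (fun _ => hφmeas.comp measurable_snd)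
  set r : ℝ≥0∞ := ∫⁻ ω, g 0 ω ∂ℙ with hrdef
  have hgident : ∀ i, ∫⁻ ω, g i ω ∂ℙ = r := by
    intro i
    have h1 : ∀ j, ∫⁻ ω, g j ω ∂ℙ = ∫⁻ x, φ x.2 ∂(Measure.map (ZM j) ℙ) := fun j =>
      (lintegral_map (hφmeas.comp measurable_snd) (hZMmeas j)).symm
    rw [hrdef, h1, h1, hiid_ident i]
  have hhident : ∀ n, ∫⁻ ω, h n ω ∂ℙ = ∫⁻ ω, h 0 ω ∂ℙ := by
    intro n
    have h1 : ∀ m, ∫⁻ ω, h m ω ∂ℙ = ∫⁻ x, φ x ∂(Measure.map (Z m) ℙ) := fun m =>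
      (lintegral_map hφmeas (hZmeas m)).symm
    rw [h1, h1, hZident n]
  set c : ℝ≥0∞ := ∫⁻ ω, h 0 ω ∂ℙ with hcdef
  -- r = ofReal ρ < 1
  have hr_eq : r = ENNReal.ofReal (∫ ω, (ZM 0 ω).2 ^ p ∂ℙ) := by
    rw [hrdef]
    have hae : (fun ω => g 0 ω) =ᵐ[ℙ] fun ω => ENNReal.ofReal ((ZM 0 ω).2 ^ p) := by
      filter_upwards [hMpos 0] with ω hω
      simp [hgdef, hφdef, abs_of_pos hω]
    rw [lintegral_congr_ae hae,
      ← ofReal_integral_eq_lintegral_ofReal hMp_int ?_]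
    filter_upwards [hMpos 0] with ω hω
    exact Real.rpow_nonneg hω.le p
  have hr1 : r < 1 := by rw [hr_eq]; exact ENNReal.ofReal_lt_one.2 hρ
  have hc_eq : c = ENNReal.ofReal (∫ ω, Z 0 ω ^ p ∂ℙ) := by
    rw [hcdef]
    have hae : (fun ω => h 0 ω) =ᵐ[ℙ] fun ω => ENNReal.ofReal (Z 0 ω ^ p) := by
      filter_upwards with ω
      simp [hhdef, hφdef, abs_of_nonneg (hZnonneg 0 ω)]
    rw [lintegral_congr_ae hae,
      ← ofReal_integral_eq_lintegral_ofReal hZp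
        (Filter.Eventually.of_forall fun ω => Real.rpow_nonneg (hZnonneg 0 ω) p)]
  have hc_ne_top : c ≠ ⊤ := by rw [hc_eq]; exact ENNReal.ofReal_ne_top
  -- key pointwise identity
  have hprod_eq : ∀ n ω,
      φ ((∏ i ∈ Finset.range n, (ZM i ω).2) * Z n ω)
        = (∏ i ∈ Finset.range n, g i ω) * h n ω := by
    intro n ω
    have h1 : |(∏ i ∈ Finset.range n, (ZM i ω).2) * Z n ω| ^ p
        = (∏ i ∈ Finset.range n, |(ZM i ω).2| ^ p) * |Z n ω| ^ p := by
      rw [abs_mul, Real.mul_rpow (abs_nonneg _) (abs_nonneg _), Finset.abs_prod,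
        ← Real.finset_prod_rpow _ _ (fun i _ => abs_nonneg _) p]
    simp only [hφdef, h1, hgdef, hhdef]
    rw [ENNReal.ofReal_mul (Finset.prod_nonneg fun i _ => Real.rpow_nonneg (abs_nonneg _) p),
      ENNReal.ofReal_prod_of_nonneg (fun i _ => Real.rpow_nonneg (abs_nonneg _) p)]
  -- lintegral of the product of g's
  have hgprod : ∀ n, ∫⁻ ω, ∏ i ∈ Finset.range n, g i ω ∂ℙ = r ^ n := by
    intro n
    induction n with
    | zero => simp
    | succ n ih =>
      have hindep : IndepFun (∏ j ∈ Finset.range n, g j) (g n) ℙ :=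
        hgiid.indepFun_prod_range_succ hgmeas n
      have hmp : AEMeasurable (∏ j ∈ Finset.range n, g j) (ℙ : Measure Ω) := by
        rw [Finset.prod_fn]
        exact (Finset.measurable_prod _ fun i _ => hgmeas i).aemeasurable
      calc ∫⁻ ω, ∏ i ∈ Finset.range (n + 1), g i ω ∂ℙ
          = ∫⁻ ω, (∏ j ∈ Finset.range n, g j) ω * g n ω ∂ℙ := by
            simp [Finset.prod_apply, Finset.prod_range_succ]
        _ = (∫⁻ ω, (∏ j ∈ Finset.range n, g j) ω ∂ℙ) * ∫⁻ ω, g n ω ∂ℙ :=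
            lintegral_mul_eq_lintegral_mul_lintegral_of_indepFun''
              hmp (hgmeas n).aemeasurable hindep
        _ = r ^ n * r := by
            rw [hgident n]
            congr 1
            rw [← ih]
            exact lintegral_congr fun ω => by simp [Finset.prod_apply]
        _ = r ^ (n + 1) := (pow_succ r n).symm
  -- independence of h n and the product
  have hindepn : ∀ n, IndepFun (fun ω => ∏ i ∈ Finset.range n, g i ω) (h n) ℙ := by
    intro n
    have : IndepFun (φ ∘ Z n)
        (φ ∘ fun ω => ∏ i ∈ Finset.range n, (ZM i ω).2) ℙ :=
      (hZindep n).comp hφmeas hφmeas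
    have heq : (φ ∘ fun ω => ∏ i ∈ Finset.range n, (ZM i ω).2)
        = fun ω => ∏ i ∈ Finset.range n, g i ω := by
      funext ω
      simp only [Function.comp_apply, hφdef, hgdef, Finset.abs_prod,
        ← Real.finset_prod_rpow _ _ (fun i _ => abs_nonneg _) p,
        ENNReal.ofReal_prod_of_nonneg (fun i _ => Real.rpow_nonneg (abs_nonneg _) p)]
    rw [heq] at this
    exact this.symm
  -- lintegral of each term
  have hterm : ∀ n, ∫⁻ ω, φ ((∏ i ∈ Finset.range n, (ZM i ω).2) * Z n ω) ∂ℙ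
      = r ^ n * c := by
    intro n
    calc ∫⁻ ω, φ ((∏ i ∈ Finset.range n, (ZM i ω).2) * Z n ω) ∂ℙ
        = ∫⁻ ω, (∏ i ∈ Finset.range n, g i ω) * h n ω ∂ℙ := by
          simp_rw [hprod_eq]
      _ = (∫⁻ ω, ∏ i ∈ Finset.range n, g i ω ∂ℙ) * ∫⁻ ω, h n ω ∂ℙ :=
          lintegral_mul_eq_lintegral_mul_lintegral_of_indepFun''
            (Finset.measurable_prod _ fun i _ => hgmeas i).aemeasurable
            (hhmeas n).aemeasurable (hindepn n)
      _ = r ^ n * c := by rw [hgprod n, hhident n]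
  -- summability
  have hsum : ∑' n, ∫⁻ ω, φ ((∏ i ∈ Finset.range n, (ZM i ω).2) * Z n ω) ∂ℙ ≠ ⊤ := by
    simp_rw [hterm]
    rw [ENNReal.tsum_mul_right, ENNReal.tsum_geometric]
    exact ENNReal.mul_ne_top
      (ENNReal.inv_ne_top.2 (tsub_pos_of_lt hr1).ne') hc_ne_top
  have hFmeas : ∀ n, Measurable fun ω =>
      φ ((∏ i ∈ Finset.range n, (ZM i ω).2) * Z n ω) := fun n =>
    hφmeas.comp ((Finset.measurable_prod _ fun i _ =>
      measurable_snd.comp (hZMmeas i)).mul (hZmeas n))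
  have hae_sum : ∀ᵐ ω ∂ℙ,
      (∑' n, φ ((∏ i ∈ Finset.range n, (ZM i ω).2) * Z n ω)) ≠ ⊤ := by
    have := lintegral_tsum (fun n => (hFmeas n).aemeasurable) (μ := (ℙ : Measure Ω))
      (f := fun n ω => φ ((∏ i ∈ Finset.range n, (ZM i ω).2) * Z n ω))
    have hlt : ∫⁻ ω, (∑' n, φ ((∏ i ∈ Finset.range n, (ZM i ω).2) * Z n ω)) ∂ℙ < ⊤ := by
      rw [this]; exact lt_top_iff_ne_top.2 hsum
    filter_upwards [ae_lt_top' (AEMeasurable.ennreal_tsum fun n => (hFmeas n).aemeasurable)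
      hlt.ne] with ω hω
    exact hω.ne
  -- conclude
  filter_upwards [hae_sum] with ω hω
  set x : ℕ → ℝ := fun n => (∏ i ∈ Finset.range n, (ZM i ω).2) * Z n ω with hxdef
  have hF0 : Tendsto (fun n => φ (x n)) atTop (nhds 0) :=
    ENNReal.tendsto_atTop_zero_of_tsum_ne_top hω
  have habsp : Tendsto (fun n => |x n| ^ p) atTop (nhds 0) := by
    have := (ENNReal.tendsto_toReal (by simp : (0 : ℝ≥0∞) ≠ ⊤)).comp hF0
    simp only [Function.comp_def, hφdef, ENNReal.toReal_ofReal
      (Real.rpow_nonneg (abs_nonneg _) p), ENNReal.toReal_zero] at this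
    exact this
  have habs : Tendsto (fun n => |x n|) atTop (nhds 0) := by
    have hcont : ContinuousAt (fun y : ℝ => y ^ p⁻¹) 0 :=
      Real.continuousAt_rpow_const 0 p⁻¹ (Or.inr (inv_pos.2 hp).le)
    have := (hcont.tendsto.comp habsp)
    simp only [Function.comp_def, Real.rpow_rpow_inv (abs_nonneg _) hp.ne',
      Real.zero_rpow (inv_ne_zero hp.ne')] at this
    exact this
  exact (tendsto_zero_iff_abs_tendsto_zero _).2 habs
end
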